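/- Let ℓ and a be natural numbers with 1 ≤ a ≤ ℓ and ℓ ≥ 2. The function p ↦ BinoTail(ℓ,a,p) = Σ_{j=a}^{ℓ} C(ℓ,j) p^j (1−p)^{ℓ−j} is concave on the interval [(a−1)/(ℓ−1), 1]. (This is the concave part of the sigmoid shape of the binomial tail asserted in the proof of the paper's Lemma 3.) -/

import Mathlib

open Finset

/-- `binoTail ℓ a p = Σ_{j=a}^{ℓ} C(ℓ,j) p^j (1−p)^{ℓ−j}`, the probability mass
in the right tail of a Binomial(ℓ,p) distribution. -/
noncomputable def binoTail (ℓ a : ℕ) (p : ℝ) : ℝ :=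
  ∑ j ∈ Finset.Icc a ℓ, (ℓ.choose j : ℝ) * p ^ j * (1 - p) ^ (ℓ - j)

lemma hasDerivAt_binoTail (ℓ a : ℕ) (ha : 1 ≤ a) (haℓ : a ≤ ℓ) (p : ℝ) :
    HasDerivAt (binoTail ℓ a)
      ((ℓ : ℝ) * ((ℓ - 1).choose (a - 1) : ℝ) * (p ^ (a - 1) * (1 - p) ^ (ℓ - a))) p := by
  set F : ℕ → ℝ := fun k => (((ℓ - 1).choose k : ℝ)) * p ^ k * (1 - p) ^ (ℓ - 1 - k) with hF
  have hFk : ∀ k, F k = (((ℓ - 1).choose k : ℝ)) * p ^ k * (1 - p) ^ (ℓ - 1 - k) := fun _ => rfl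
  have hterm : ∀ j ∈ Finset.Icc a ℓ,
      HasDerivAt (fun x : ℝ => (ℓ.choose j : ℝ) * x ^ j * (1 - x) ^ (ℓ - j))
        ((ℓ : ℝ) * (F (j - 1) - F j)) p := by
    intro j hj
    rw [Finset.mem_Icc] at hj
    have hj1 : 1 ≤ j := le_trans ha hj.1
    have h1 : HasDerivAt (fun x : ℝ => (ℓ.choose j : ℝ) * x ^ j)
        ((ℓ.choose j : ℝ) * ((j : ℝ) * p ^ (j - 1))) p := (hasDerivAt_pow j p).const_mul _
    have h2 : HasDerivAt (fun x : ℝ => (1 - x) ^ (ℓ - j))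
        (((ℓ - j : ℕ) : ℝ) * (1 - p) ^ (ℓ - j - 1) * (-1)) p := by
      exact (hasDerivAt_pow (ℓ - j) (1 - p)).comp p ((hasDerivAt_id p).const_sub 1)
    have h3 := h1.mul h2
    convert h3 using 1
    · rfl
    · rfl
    · rfl
    have e1n : j * ℓ.choose j = ℓ * (ℓ - 1).choose (j - 1) := by
      obtain ⟨j', rfl⟩ : ∃ j', j = j' + 1 := ⟨j - 1, by omega⟩
      obtain ⟨ℓ', rfl⟩ : ∃ ℓ', ℓ = ℓ' + 1 := ⟨ℓ - 1, by omega⟩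
      simp only [Nat.add_sub_cancel]
      have h := Nat.add_one_mul_choose_eq ℓ' j'
      rw [h]; ring
    have e2n : (ℓ - j) * ℓ.choose j = ℓ * (ℓ - 1).choose j := by
      obtain ⟨ℓ', rfl⟩ : ∃ ℓ', ℓ = ℓ' + 1 := ⟨ℓ - 1, by omega⟩
      simp only [Nat.add_sub_cancel]
      rw [mul_comm (ℓ' + 1 - j) ((ℓ' + 1).choose j), ← Nat.choose_mul_succ_eq]
      ring
    have e1 : (j : ℝ) * (ℓ.choose j : ℝ) = (ℓ : ℝ) * ((ℓ - 1).choose (j - 1) : ℝ) := by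
      exact_mod_cast congrArg (Nat.cast (R := ℝ)) e1n
    have e2 : ((ℓ - j : ℕ) : ℝ) * (ℓ.choose j : ℝ) = (ℓ : ℝ) * ((ℓ - 1).choose j : ℝ) := by
      exact_mod_cast congrArg (Nat.cast (R := ℝ)) e2n
    have e3 : ℓ - 1 - (j - 1) = ℓ - j := by omega
    have e4 : ℓ - j - 1 = ℓ - 1 - j := by omega
    rw [hFk, hFk, e3, e4, mul_sub]
    rw [show (ℓ : ℝ) * (((ℓ - 1).choose (j - 1) : ℝ) * p ^ (j - 1) * (1 - p) ^ (ℓ - j))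
        = ((j : ℝ) * (ℓ.choose j : ℝ)) * p ^ (j - 1) * (1 - p) ^ (ℓ - j) from by rw [e1]; ring,
      show (ℓ : ℝ) * (((ℓ - 1).choose j : ℝ) * p ^ j * (1 - p) ^ (ℓ - 1 - j))
        = (((ℓ - j : ℕ) : ℝ) * (ℓ.choose j : ℝ)) * p ^ j * (1 - p) ^ (ℓ - 1 - j) from by
          rw [e2]; ring]
    ring
  have hsum := HasDerivAt.fun_sum hterm
  have hkey : ∑ j ∈ Finset.Icc a ℓ, (ℓ : ℝ) * (F (j - 1) - F j)
      = (ℓ : ℝ) * ((ℓ - 1).choose (a - 1) : ℝ) * (p ^ (a - 1) * (1 - p) ^ (ℓ - a)) := by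
    rw [← Finset.mul_sum]
    have htel : ∑ j ∈ Finset.Icc a ℓ, (F (j - 1) - F j) = F (a - 1) - F ℓ := by
      have hIcc : Finset.Icc a ℓ = Finset.Ico a (ℓ + 1) := by
        rw [Finset.Ico_add_one_right_eq_Icc]
      rw [hIcc, Finset.sum_Ico_eq_sum_range]
      have : ∀ i ∈ Finset.range (ℓ + 1 - a), (F (a + i - 1) - F (a + i))
          = (fun k => F (a - 1 + k)) i - (fun k => F (a - 1 + k)) (i + 1) := by
        intro i _
        congr 2 <;> omega
      rw [Finset.sum_congr rfl this, Finset.sum_range_sub']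
      congr 2 <;> omega
    rw [htel]
    have hFl : F ℓ = 0 := by
      rw [hFk]; simp [Nat.choose_eq_zero_of_lt (by omega : ℓ - 1 < ℓ)]
    rw [hFl, sub_zero, hFk]
    have e5 : ℓ - 1 - (a - 1) = ℓ - a := by omega
    rw [e5]; ring
  rw [hkey] at hsum
  exact hsum


/-- For `1 ≤ a ≤ ℓ` with `ℓ ≥ 2`, the function `p ↦ BinoTail(ℓ,a,p)` is
concave on the interval `[(a−1)/(ℓ−1), 1]`. -/
theorem binoTail_concaveOn (ℓ a : ℕ) (ha : 1 ≤ a) (haℓ : a ≤ ℓ) (hℓ : 2 ≤ ℓ) :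
    ConcaveOn ℝ (Set.Icc (((a : ℝ) - 1) / ((ℓ : ℝ) - 1)) 1) (binoTail ℓ a) := by
  set C : ℝ := (ℓ : ℝ) * ((ℓ - 1).choose (a - 1) : ℝ) with hC
  have hC0 : 0 ≤ C := by positivity
  set f' : ℝ → ℝ := fun p => C * (p ^ (a - 1) * (1 - p) ^ (ℓ - a)) with hf'def
  set f'' : ℝ → ℝ := fun p =>
    C * (((a - 1 : ℕ) : ℝ) * p ^ (a - 1 - 1) * (1 - p) ^ (ℓ - a)
      - ((ℓ - a : ℕ) : ℝ) * p ^ (a - 1) * (1 - p) ^ (ℓ - a - 1)) with hf''def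
  apply concaveOn_of_hasDerivWithinAt2_nonpos (f' := f') (f'' := f'') (convex_Icc _ _)
  · have : Continuous (binoTail ℓ a) := by
      unfold binoTail
      exact continuous_finset_sum _ fun j _ => by continuity
    exact this.continuousOn
  · intro x _
    exact (hasDerivAt_binoTail ℓ a ha haℓ x).hasDerivWithinAt
  · intro x _
    have h1 : HasDerivAt (fun p : ℝ => p ^ (a - 1))
        (((a - 1 : ℕ) : ℝ) * x ^ (a - 1 - 1)) x := hasDerivAt_pow _ x
    have h2 : HasDerivAt (fun p : ℝ => (1 - p) ^ (ℓ - a))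
        (((ℓ - a : ℕ) : ℝ) * (1 - x) ^ (ℓ - a - 1) * (-1)) x :=
      (hasDerivAt_pow (ℓ - a) (1 - x)).comp x ((hasDerivAt_id x).const_sub 1)
    have := ((h1.mul h2).const_mul C)
    convert this.hasDerivWithinAt using 1
    · rfl
    · rfl
    · rfl
    rw [hf''def]; ring
  · intro x hx
    rw [interior_Icc] at hx
    obtain ⟨hx1, hx2⟩ := hx
    have hℓ1 : (1 : ℝ) ≤ (ℓ : ℝ) - 1 := by
      have : (2 : ℝ) ≤ (ℓ : ℝ) := by exact_mod_cast hℓ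
      linarith
    have ha1 : (1 : ℝ) ≤ (a : ℝ) := by exact_mod_cast ha
    have hc0 : (0 : ℝ) ≤ ((a : ℝ) - 1) / ((ℓ : ℝ) - 1) :=
      div_nonneg (by linarith) (by linarith)
    have hx0 : 0 < x := lt_of_le_of_lt hc0 hx1
    have hx3 : 0 < 1 - x := by linarith
    rw [hf''def]
    apply mul_nonpos_of_nonneg_of_nonpos hC0
    rw [sub_nonpos]
    rcases Nat.lt_or_ge a 2 with h2a | h2a
    · have : a = 1 := by omega
      subst this
      simp only [Nat.sub_self, Nat.cast_zero, zero_mul]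
      positivity
    · have haℓ' : a < ℓ := by
        by_contra h
        have : a = ℓ := by omega
        subst this
        rw [div_self (by linarith : (a : ℝ) - 1 ≠ 0)] at hx1
        linarith
      have hxc : ((a : ℝ) - 1) ≤ ((ℓ : ℝ) - 1) * x := by
        have := (div_le_iff₀ (by linarith : (0 : ℝ) < (ℓ : ℝ) - 1)).mp hx1.le
        linarith
      have key : ((a : ℝ) - 1) * (1 - x) ≤ ((ℓ : ℝ) - (a : ℝ)) * x := by nlinarith
      have e1 : x ^ (a - 1) = x ^ (a - 1 - 1) * x := by
        rw [← pow_succ]; congr 1; omega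
      have e2 : (1 - x) ^ (ℓ - a) = (1 - x) ^ (ℓ - a - 1) * (1 - x) := by
        rw [← pow_succ]; congr 1; omega
      rw [e1, e2]
      have ca : ((a - 1 : ℕ) : ℝ) = (a : ℝ) - 1 := by push_cast [Nat.cast_sub ha]; ring
      have cb : ((ℓ - a : ℕ) : ℝ) = (ℓ : ℝ) - (a : ℝ) := by
        push_cast [Nat.cast_sub haℓ]; ring
      rw [ca, cb]
      have hp1 : (0 : ℝ) ≤ x ^ (a - 1 - 1) := by positivity
      have hp2 : (0 : ℝ) ≤ (1 - x) ^ (ℓ - a - 1) := by positivity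
      calc ((a : ℝ) - 1) * x ^ (a - 1 - 1) * ((1 - x) ^ (ℓ - a - 1) * (1 - x))
          = (((a : ℝ) - 1) * (1 - x)) * (x ^ (a - 1 - 1) * (1 - x) ^ (ℓ - a - 1)) := by ring
        _ ≤ ((((ℓ : ℝ) - a) * x)) * (x ^ (a - 1 - 1) * (1 - x) ^ (ℓ - a - 1)) := by
            exact mul_le_mul_of_nonneg_right key (mul_nonneg hp1 hp2)
        _ = ((ℓ : ℝ) - ↑a) * (x ^ (a - 1 - 1) * x) * (1 - x) ^ (ℓ - a - 1) := by ring
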